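/- arXiv:2005.06666 — 7 statements merged into one kernel-verified Lean document; each statement's English description precedes it below -/
import Mathlib

section
/- Let M be a positive integer, ρ > 0, let p_1,...,p_M be a probability vector, and let c_1,...,c_M be positive reals with cumulative sums S_i = c_1 + ... + c_i. Then ∑_{i=1}^M S_i^ρ p_i ≥ (∑_{i=1}^M 1/S_i)^{−ρ} · (∑_{i=1}^M p_i^{1/(1+ρ)})^{1+ρ}. -/
/-- Hölder-based lower bound on the ρ-th moment of guessing cost. -/
theorem guessing_cost_holder_lower_bound
    (M : ℕ) (hM : 0 < M) (ρ : ℝ) (hρ : 0 < ρ)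
    (p c : ℕ → ℝ)
    (hp : ∀ k, 1 ≤ k → k ≤ M → 0 ≤ p k)
    (hpsum : ∑ k ∈ Finset.Icc 1 M, p k = 1)
    (hc : ∀ k, 1 ≤ k → k ≤ M → 0 < c k)
    (S : ℕ → ℝ) (hS : ∀ k, S k = ∑ l ∈ Finset.Icc 1 k, c l) :
    (∑ i ∈ Finset.Icc 1 M, 1 / S i) ^ (-ρ) *
        (∑ i ∈ Finset.Icc 1 M, p i ^ (1 / (1 + ρ))) ^ (1 + ρ) ≤
      ∑ i ∈ Finset.Icc 1 M, S i ^ ρ * p i := by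
  have hρ1 : (0:ℝ) < 1 + ρ := by linarith
  have hSpos : ∀ i ∈ Finset.Icc 1 M, 0 < S i := by
    intro i hi
    simp only [Finset.mem_Icc] at hi
    rw [hS]
    apply Finset.sum_pos
    · intro l hl
      simp only [Finset.mem_Icc] at hl
      exact hc l hl.1 (le_trans hl.2 hi.2)
    · exact Finset.nonempty_Icc.mpr hi.1
  have hconj : Real.HolderConjugate ((1 + ρ) / ρ) (1 + ρ) := by
    rw [Real.holderConjugate_iff]
    constructor
    · rw [lt_div_iff₀ hρ]; linarith
    · field_simp; ring
  have hH := Real.inner_le_Lp_mul_Lq (Finset.Icc 1 M)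
      (fun i => S i ^ (-(ρ / (1 + ρ)))) (fun i => S i ^ (ρ / (1 + ρ)) * p i ^ (1 / (1 + ρ)))
      hconj
  -- rewrite the three sums
  have e1 : ∑ i ∈ Finset.Icc 1 M, S i ^ (-(ρ / (1 + ρ))) *
      (S i ^ (ρ / (1 + ρ)) * p i ^ (1 / (1 + ρ))) =
      ∑ i ∈ Finset.Icc 1 M, p i ^ (1 / (1 + ρ)) := by
    apply Finset.sum_congr rfl
    intro i hi
    rw [← mul_assoc, ← Real.rpow_add (hSpos i hi)]
    simp
  have e2 : ∑ i ∈ Finset.Icc 1 M, |S i ^ (-(ρ / (1 + ρ)))| ^ ((1 + ρ) / ρ) =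
      ∑ i ∈ Finset.Icc 1 M, 1 / S i := by
    apply Finset.sum_congr rfl
    intro i hi
    have h0 := hSpos i hi
    rw [abs_of_nonneg (Real.rpow_nonneg h0.le _), ← Real.rpow_mul h0.le,
      show (-(ρ / (1 + ρ))) * ((1 + ρ) / ρ) = -1 by field_simp,
      Real.rpow_neg_one, one_div]
  have e3 : ∑ i ∈ Finset.Icc 1 M, |S i ^ (ρ / (1 + ρ)) * p i ^ (1 / (1 + ρ))| ^ (1 + ρ) =
      ∑ i ∈ Finset.Icc 1 M, S i ^ ρ * p i := by
    apply Finset.sum_congr rfl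
    intro i hi
    have h0 := hSpos i hi
    simp only [Finset.mem_Icc] at hi
    have hpi := hp i hi.1 hi.2
    rw [abs_of_nonneg (mul_nonneg (Real.rpow_nonneg h0.le _) (Real.rpow_nonneg hpi _)),
      Real.mul_rpow (Real.rpow_nonneg h0.le _) (Real.rpow_nonneg hpi _),
      ← Real.rpow_mul h0.le, ← Real.rpow_mul hpi,
      div_mul_cancel₀ _ (ne_of_gt hρ1), div_mul_cancel₀ _ (ne_of_gt hρ1), Real.rpow_one]
  rw [e1, e2, e3] at hH
  set A := ∑ i ∈ Finset.Icc 1 M, 1 / S i with hA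
  set B := ∑ i ∈ Finset.Icc 1 M, p i ^ (1 / (1 + ρ)) with hB
  set C := ∑ i ∈ Finset.Icc 1 M, S i ^ ρ * p i with hC
  have hApos : 0 < A := by
    apply Finset.sum_pos
    · intro i hi; exact div_pos one_pos (hSpos i hi)
    · exact Finset.nonempty_Icc.mpr hM
  have hBnn : 0 ≤ B := Finset.sum_nonneg fun i hi => Real.rpow_nonneg
      (by simp only [Finset.mem_Icc] at hi; exact hp i hi.1 hi.2) _
  have hCnn : 0 ≤ C := Finset.sum_nonneg fun i hi => mul_nonneg
      (Real.rpow_nonneg (hSpos i hi).le _)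
      (by simp only [Finset.mem_Icc] at hi; exact hp i hi.1 hi.2)
  -- raise Hölder to power 1+ρ
  have key : B ^ (1 + ρ) ≤ A ^ ρ * C := by
    have := Real.rpow_le_rpow hBnn hH hρ1.le
    calc B ^ (1 + ρ) ≤ (A ^ (1 / ((1 + ρ) / ρ)) * C ^ (1 / (1 + ρ))) ^ (1 + ρ) := this
      _ = A ^ ρ * C := by
          rw [Real.mul_rpow (Real.rpow_nonneg hApos.le _) (Real.rpow_nonneg hCnn _),
            ← Real.rpow_mul hApos.le, ← Real.rpow_mul hCnn]
          rw [show 1 / ((1 + ρ) / ρ) * (1 + ρ) = ρ by field_simp,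
            one_div_mul_cancel (ne_of_gt hρ1), Real.rpow_one]
  calc A ^ (-ρ) * B ^ (1 + ρ) ≤ A ^ (-ρ) * (A ^ ρ * C) := by
        exact mul_le_mul_of_nonneg_left key (Real.rpow_nonneg hApos.le _)
    _ = C := by
        rw [← mul_assoc, ← Real.rpow_add hApos]
        simp
end

section
/- Let X be a random variable on a finite set {x_1,...,x_M} with probabilities P(x) and positive costs c_x satisfying, for the optimal mean-cost order, c_{x'} P(x) ≤ c_x P(x') whenever x' is guessed no later than x. Then for any ρ ≥ 0, the ρ-th moment of the guessing cost under this order satisfies ∑_x P(x) C(x)^ρ ≤ (∑_x c_x^{ρ/(1+ρ)} P(x)^{1/(1+ρ)})^{1+ρ}, where C(x) = ∑_{x': guessed no later than x} c_{x'}. -/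
/-- Single-letter upper bound on moments of guessing cost under the optimal
mean-cost order (analogue of Arikan's bound with costs, Theorem 3.2). -/
theorem guessing_cost_moment_upper_bound
    (M : ℕ) (hM : 0 < M) (ρ : ℝ) (hρ : 0 ≤ ρ)
    (P c : Fin M → ℝ)
    (hP : ∀ x, 0 ≤ P x) (hPsum : ∑ x, P x = 1)
    (hc : ∀ x, 0 < c x)
    (hopt : ∀ x' x : Fin M, x' ≤ x → c x' * P x ≤ c x * P x')
    (C : Fin M → ℝ) (hC : ∀ x, C x = ∑ x' ∈ Finset.Iic x, c x') :
    ∑ x, P x * C x ^ ρ ≤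
      (∑ x, c x ^ (ρ / (1 + ρ)) * P x ^ (1 / (1 + ρ))) ^ (1 + ρ) := by
  set a : ℝ := ρ / (1 + ρ) with ha_def
  set b : ℝ := 1 / (1 + ρ) with hb_def
  have h1ρ : (0:ℝ) < 1 + ρ := by linarith
  have ha : 0 ≤ a := div_nonneg hρ h1ρ.le
  have hb : 0 < b := by positivity
  have hab : a + b = 1 := by
    rw [ha_def, hb_def, ← add_div, add_comm ρ 1, div_self h1ρ.ne']
  set S : ℝ := ∑ x, c x ^ a * P x ^ b with hS_def
  have hterm_nonneg : ∀ x : Fin M, 0 ≤ c x ^ a * P x ^ b := fun x =>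
    mul_nonneg (Real.rpow_nonneg (hc x).le a) (Real.rpow_nonneg (hP x) b)
  have hSnonneg : 0 ≤ S := Finset.sum_nonneg fun x _ => hterm_nonneg x
  have hSpos : 0 < S := by
    obtain ⟨x, hx⟩ : ∃ x : Fin M, P x ≠ 0 := by
      by_contra h
      push_neg at h
      rw [Finset.sum_eq_zero (fun i _ => h i)] at hPsum
      norm_num at hPsum
    refine Finset.sum_pos' (fun x _ => hterm_nonneg x) ⟨x, Finset.mem_univ x, ?_⟩
    have hPx : 0 < P x := lt_of_le_of_ne (hP x) (Ne.symm hx)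
    exact mul_pos (Real.rpow_pos_of_pos (hc x) a) (Real.rpow_pos_of_pos hPx b)
  have key : ∀ x : Fin M, P x * C x ^ ρ ≤ (c x ^ a * P x ^ b) * S ^ ρ := by
    intro x
    rcases eq_or_lt_of_le (hP x) with hPx | hPx
    · rw [← hPx, zero_mul]
      exact mul_nonneg (mul_nonneg (Real.rpow_nonneg (hc x).le a)
        (Real.rpow_nonneg le_rfl b)) (Real.rpow_nonneg hSnonneg ρ)
    · -- P x > 0
      have hCx : C x ≤ (c x / P x) ^ b * S := by
        rw [hC x]
        have step : ∀ x' ∈ Finset.Iic x,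
            c x' ≤ (c x / P x) ^ b * (c x' ^ a * P x' ^ b) := by
          intro x' hx'
          have hle : c x' ≤ c x / P x * P x' := by
            rw [div_mul_eq_mul_div, le_div_iff₀ hPx]
            exact hopt x' x (Finset.mem_Iic.mp hx')
          have hcb : c x' ^ b ≤ (c x / P x * P x') ^ b :=
            Real.rpow_le_rpow (hc x').le hle hb.le
          calc c x' = c x' ^ a * c x' ^ b := by
                rw [← Real.rpow_add (hc x'), hab, Real.rpow_one]
            _ ≤ c x' ^ a * (c x / P x * P x') ^ b :=
                mul_le_mul_of_nonneg_left hcb (Real.rpow_nonneg (hc x').le a)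
            _ = (c x / P x) ^ b * (c x' ^ a * P x' ^ b) := by
                rw [Real.mul_rpow (div_nonneg (hc x).le hPx.le) (hP x')]
                ring
        calc ∑ x' ∈ Finset.Iic x, c x'
            ≤ ∑ x' ∈ Finset.Iic x, (c x / P x) ^ b * (c x' ^ a * P x' ^ b) :=
              Finset.sum_le_sum step
          _ = (c x / P x) ^ b * ∑ x' ∈ Finset.Iic x, c x' ^ a * P x' ^ b := by
              rw [Finset.mul_sum]
          _ ≤ (c x / P x) ^ b * S := by
              refine mul_le_mul_of_nonneg_left ?_
                (Real.rpow_nonneg (div_nonneg (hc x).le hPx.le) b)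
              exact Finset.sum_le_sum_of_subset_of_nonneg
                (Finset.subset_univ _) (fun i _ _ => hterm_nonneg i)
      have hCnonneg : 0 ≤ C x := by
        rw [hC x]
        exact Finset.sum_nonneg fun i _ => (hc i).le
      have hCρ : C x ^ ρ ≤ ((c x / P x) ^ b * S) ^ ρ :=
        Real.rpow_le_rpow hCnonneg hCx hρ
      have hdiv : 0 ≤ (c x / P x) ^ b := Real.rpow_nonneg (div_nonneg (hc x).le hPx.le) b
      have expand : ((c x / P x) ^ b * S) ^ ρ = (c x / P x) ^ a * S ^ ρ := by
        rw [Real.mul_rpow hdiv hSnonneg,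
          ← Real.rpow_mul (div_nonneg (hc x).le hPx.le)]
        congr 2
        rw [hb_def, ha_def]; ring
      have hPmul : P x * (c x / P x) ^ a = c x ^ a * P x ^ b := by
        rw [Real.div_rpow (hc x).le hPx.le]
        rw [mul_div_assoc', mul_comm (P x), mul_div_assoc]
        congr 1
        rw [div_eq_iff (ne_of_gt (Real.rpow_pos_of_pos hPx a)),
          ← Real.rpow_add hPx, show b + a = (1:ℝ) by linarith, Real.rpow_one]
      calc P x * C x ^ ρ ≤ P x * ((c x / P x) ^ b * S) ^ ρ :=
            mul_le_mul_of_nonneg_left hCρ hPx.le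
        _ = P x * ((c x / P x) ^ a * S ^ ρ) := by rw [expand]
        _ = (c x ^ a * P x ^ b) * S ^ ρ := by rw [← mul_assoc, hPmul]
  calc ∑ x, P x * C x ^ ρ ≤ ∑ x, (c x ^ a * P x ^ b) * S ^ ρ :=
        Finset.sum_le_sum fun x _ => key x
    _ = S * S ^ ρ := by rw [← Finset.sum_mul]
    _ = S ^ (1 + ρ) := by
        rw [Real.rpow_add hSpos, Real.rpow_one]
end

section
/- Let M' be a positive integer and q_1,...,q_{M'} nonnegative reals satisfying q_{k+1}^{1/ρ} ≤ (q_1^{1/ρ} + ... + q_k^{1/ρ})/k for k = 1,...,M'−1, where ρ ≥ 1. Then ∑_{k=1}^{M'} (k^ρ − (k−1)^ρ) q_k ≤ (∑_{k=1}^{M'} q_k^{1/ρ})^ρ. -/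
-- key: monotonicity of t ↦ (t+x)^ρ - t^ρ via convexity of rpow
lemma key_rpow_mono (ρ x a b : ℝ) (hρ : 1 ≤ ρ) (hx : 0 ≤ x) (ha : 0 ≤ a) (hab : a ≤ b) :
    (a + x) ^ ρ - a ^ ρ ≤ (b + x) ^ ρ - b ^ ρ := by
  have hb : 0 ≤ b := ha.trans hab
  rcases eq_or_lt_of_le hab with rfl | hab'
  · simp
  rcases eq_or_lt_of_le hx with rfl | hx'
  · simp
  have hconv := convexOn_rpow hρ
  set L : ℝ := b + x - a with hL
  have hLpos : 0 < L := by simp [hL]; linarith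
  set t : ℝ := x / L with ht
  set s : ℝ := (b - a) / L with hs
  have hts : t + s = 1 := by field_simp [ht, hs, hL]; rw [ht, hs, ← add_div, div_eq_one_iff_eq hLpos.ne', hL]; ring
  have ht0 : 0 ≤ t := div_nonneg hx hLpos.le
  have hs0 : 0 ≤ s := div_nonneg (by linarith) hLpos.le
  have hma : a ∈ Set.Ici (0:ℝ) := ha
  have hmbx : b + x ∈ Set.Ici (0:ℝ) := by simp; linarith
  have h1 := hconv.2 hma hmbx (by linarith : (0:ℝ) ≤ 1 - t) ht0 (by ring)
  have h2 := hconv.2 hma hmbx (by linarith : (0:ℝ) ≤ 1 - s) hs0 (by ring)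
  have e1 : (1 - t) • a + t • (b + x) = a + x := by
    simp only [smul_eq_mul]
    field_simp [ht, hL]
    have htL : t * (b + x - a) = x := by rw [← hL, ht, div_mul_cancel₀ _ hLpos.ne']
    linear_combination htL
  have e2 : (1 - s) • a + s • (b + x) = b := by
    simp only [smul_eq_mul]
    field_simp [hs, hL]
    have hsL : s * (b + x - a) = b - a := by rw [← hL, hs, div_mul_cancel₀ _ hLpos.ne']
    linear_combination hsL
  rw [e1] at h1
  rw [e2] at h2
  simp only [smul_eq_mul] at h1 h2
  have hkey : (a + x) ^ ρ + b ^ ρ ≤ a ^ ρ + (b + x) ^ ρ := by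
    calc (a + x) ^ ρ + b ^ ρ
        ≤ ((1 - t) * a ^ ρ + t * (b + x) ^ ρ) + ((1 - s) * a ^ ρ + s * (b + x) ^ ρ) :=
          add_le_add h1 h2
      _ = (2 - (t + s)) * a ^ ρ + (t + s) * (b + x) ^ ρ := by ring
      _ = a ^ ρ + (b + x) ^ ρ := by rw [hts]; ring
  linarith

/-- Boztas' weighted lemma in the guessing-cost setting. -/
theorem boztas_weighted_lemma
    (M' : ℕ) (hM' : 0 < M') (ρ : ℝ) (hρ : 1 ≤ ρ)
    (q : ℕ → ℝ) (hq : ∀ k, 1 ≤ k → k ≤ M' → 0 ≤ q k)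
    (hcond : ∀ k, 1 ≤ k → k ≤ M' - 1 →
      q (k + 1) ^ (1 / ρ) ≤ (∑ l ∈ Finset.Icc 1 k, q l ^ (1 / ρ)) / (k : ℝ)) :
    ∑ k ∈ Finset.Icc 1 M', ((k : ℝ) ^ ρ - ((k : ℝ) - 1) ^ ρ) * q k ≤
      (∑ k ∈ Finset.Icc 1 M', q k ^ (1 / ρ)) ^ ρ := by
  have hρ0 : ρ ≠ 0 := by linarith
  have main : ∀ n, 1 ≤ n → n ≤ M' →
      ∑ k ∈ Finset.Icc 1 n, ((k : ℝ) ^ ρ - ((k : ℝ) - 1) ^ ρ) * q k ≤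
      (∑ k ∈ Finset.Icc 1 n, q k ^ (1 / ρ)) ^ ρ := by
    intro n
    induction n with
    | zero => omega
    | succ n ih =>
      intro _ hn1
      rcases Nat.eq_zero_or_pos n with rfl | hn0
      · -- base case n+1 = 1
        have hq1 : 0 ≤ q 1 := hq 1 le_rfl hM'
        simp only [Finset.Icc_self, Finset.sum_singleton]
        rw [one_div, Real.rpow_inv_rpow hq1 hρ0]
        norm_num [Real.zero_rpow hρ0, Real.one_rpow]
      · have hnM : n ≤ M' := by omega
        have ihn := ih hn0 hnM
        set S := ∑ k ∈ Finset.Icc 1 n, q k ^ (1 / ρ) with hS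
        set x := q (n + 1) ^ (1 / ρ) with hx
        have hx0 : 0 ≤ x := Real.rpow_nonneg (hq (n+1) (by omega) hn1) _
        have hS0 : 0 ≤ S := Finset.sum_nonneg fun k hk =>
          Real.rpow_nonneg (hq k (Finset.mem_Icc.mp hk).1 (le_trans (Finset.mem_Icc.mp hk).2 hnM)) _
        have hcd := hcond n hn0 (by omega)
        have hnx : (n : ℝ) * x ≤ S := by
          have hcd' : x ≤ S / (n : ℝ) := hcd
          rw [le_div_iff₀ (by positivity : (0:ℝ) < (n:ℝ))] at hcd'
          linarith
        have hqx : q (n+1) = x ^ ρ := by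
          rw [hx, one_div, Real.rpow_inv_rpow (hq (n+1) (by omega) hn1) hρ0]
        have hsum1 : ∑ k ∈ Finset.Icc 1 (n+1), ((k : ℝ) ^ ρ - ((k : ℝ) - 1) ^ ρ) * q k
            = (∑ k ∈ Finset.Icc 1 n, ((k : ℝ) ^ ρ - ((k : ℝ) - 1) ^ ρ) * q k)
              + (((n:ℝ)+1) ^ ρ - (n:ℝ) ^ ρ) * q (n+1) := by
          rw [Finset.sum_Icc_succ_top (by omega : 1 ≤ n + 1)]
          push_cast
          rw [show ((n:ℝ) + 1 - 1) = (n:ℝ) from by ring]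
        have hsum2 : ∑ k ∈ Finset.Icc 1 (n+1), q k ^ (1 / ρ) = S + x := by
          rw [Finset.sum_Icc_succ_top (by omega : 1 ≤ n + 1)]
        rw [hsum1, hsum2]
        have hstep : (((n:ℝ)+1) ^ ρ - (n:ℝ) ^ ρ) * q (n+1) ≤ (S + x) ^ ρ - S ^ ρ := by
          have h1 : (((n:ℝ)+1) ^ ρ - (n:ℝ) ^ ρ) * x ^ ρ
              = ((n:ℝ)*x + x) ^ ρ - ((n:ℝ)*x) ^ ρ := by
            rw [sub_mul, ← Real.mul_rpow (by positivity) hx0,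
              ← Real.mul_rpow (by positivity) hx0,
              show ((n:ℝ) + 1) * x = (n:ℝ) * x + x from by ring]
          have h2 := key_rpow_mono ρ x ((n:ℝ)*x) S hρ hx0 (by positivity) hnx
          rw [hqx, h1]
          linarith
        linarith
  exact main M' hM' le_rfl
end

section
/- Let c ≥ 1 be real and ρ ≥ 1. Define r(u) = (u^{1+ρ} − (u−c)^{1+ρ} − c^{1+ρ})/(c(1+ρ)) − (u−c)^ρ for u ≥ c. Then r(u) ≥ 0 for all u ≥ c. -/
/-- Tangent-line inequality for `rpow` with exponent `ρ ≥ 1`: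
`(x + c) ^ ρ ≥ x ^ ρ + ρ * c * x ^ (ρ - 1)`. -/
lemma rpow_tangent_aux (c ρ x : ℝ) (hc : 0 < c) (hρ : 1 ≤ ρ) (hx : 0 ≤ x) :
    x ^ ρ + ρ * c * x ^ (ρ - 1) ≤ (x + c) ^ ρ := by
  have hlt : x < x + c := by linarith
  have hcont : ContinuousOn (fun t : ℝ => t ^ ρ) (Set.Icc x (x + c)) := by
    intro t _
    exact (Real.continuousAt_rpow_const t ρ (Or.inr (by linarith))).continuousWithinAt
  have hderiv : ∀ t ∈ Set.Ioo x (x + c),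
      HasDerivAt (fun t : ℝ => t ^ ρ) (ρ * t ^ (ρ - 1)) t := fun t _ =>
    Real.hasDerivAt_rpow_const (Or.inr hρ)
  obtain ⟨ξ, hξ, hslope⟩ := exists_hasDerivAt_eq_slope (fun t : ℝ => t ^ ρ)
    (fun t => ρ * t ^ (ρ - 1)) hlt hcont hderiv
  have hξx : x ≤ ξ := le_of_lt hξ.1
  have hmono : x ^ (ρ - 1) ≤ ξ ^ (ρ - 1) :=
    Real.rpow_le_rpow hx hξx (by linarith)
  have hρ0 : 0 ≤ ρ := by linarith
  have h1 : ρ * x ^ (ρ - 1) ≤ ((x + c) ^ ρ - x ^ ρ) / (x + c - x) := by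
    rw [← hslope]
    exact mul_le_mul_of_nonneg_left hmono hρ0
  have h2 : ρ * x ^ (ρ - 1) * c ≤ (x + c) ^ ρ - x ^ ρ := by
    have := mul_le_mul_of_nonneg_right h1 hc.le
    rw [add_sub_cancel_left, div_mul_cancel₀ _ hc.ne'] at this
    linarith
  linarith

/-- Nonnegativity of the parametric function r(u) for ρ ≥ 1 (Appendix E). -/
theorem parametric_nonneg_rho_ge_one (c ρ : ℝ) (hc : 1 ≤ c) (hρ : 1 ≤ ρ) :
    ∀ u : ℝ, c ≤ u →
      0 ≤ (u ^ (1 + ρ) - (u - c) ^ (1 + ρ) - c ^ (1 + ρ)) / (c * (1 + ρ)) -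
          (u - c) ^ ρ := by
  intro u hu
  set r : ℝ → ℝ := fun v =>
    (v ^ (1 + ρ) - (v - c) ^ (1 + ρ) - c ^ (1 + ρ)) / (c * (1 + ρ)) - (v - c) ^ ρ
    with hr
  have hc0 : (0:ℝ) < c := by linarith
  have hrc : r c = 0 := by
    simp only [hr, sub_self]
    rw [Real.zero_rpow (by linarith : (1:ℝ) + ρ ≠ 0),
        Real.zero_rpow (by linarith : ρ ≠ 0)]
    ring
  -- derivative of r
  have hD : ∀ v : ℝ, c ≤ v → HasDerivAt r
      (((1 + ρ) * v ^ ρ - (1 + ρ) * (v - c) ^ ρ) / (c * (1 + ρ)) -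
        ρ * (v - c) ^ (ρ - 1)) v := by
    intro v hv
    have h1 : HasDerivAt (fun w : ℝ => w ^ (1 + ρ)) ((1 + ρ) * v ^ ρ) v := by
      have := Real.hasDerivAt_rpow_const (p := 1 + ρ) (x := v) (Or.inr (by linarith))
      simpa using this
    have hsub : HasDerivAt (fun w : ℝ => w - c) 1 v := by
      simpa using (hasDerivAt_id v).sub_const c
    have h2 : HasDerivAt (fun w : ℝ => (w - c) ^ (1 + ρ)) ((1 + ρ) * (v - c) ^ ρ) v := by
      have := (Real.hasDerivAt_rpow_const (p := 1 + ρ) (x := v - c)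
        (Or.inr (by linarith))).comp v hsub
      simp at this; exact this
    have h3 : HasDerivAt (fun w : ℝ => (w - c) ^ ρ) (ρ * (v - c) ^ (ρ - 1)) v := by
      have := (Real.hasDerivAt_rpow_const (p := ρ) (x := v - c)
        (Or.inr hρ)).comp v hsub
      simp at this; exact this
    have h4 := (((h1.sub h2).sub_const (c ^ (1 + ρ))).div_const (c * (1 + ρ))).sub h3
    exact h4
  -- derivative is nonneg on [c, ∞)
  have hDnn : ∀ v : ℝ, c ≤ v →
      0 ≤ ((1 + ρ) * v ^ ρ - (1 + ρ) * (v - c) ^ ρ) / (c * (1 + ρ)) -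
        ρ * (v - c) ^ (ρ - 1) := by
    intro v hv
    have hkey := rpow_tangent_aux c ρ (v - c) hc0 hρ (by linarith)
    rw [sub_add_cancel] at hkey
    have hden : (0:ℝ) < c * (1 + ρ) := by positivity
    rw [sub_nonneg, le_div_iff₀ hden]
    nlinarith [hkey]
  rcases eq_or_lt_of_le hu with heq | hlt
  · subst heq; rw [← hrc]
  · have hcont : ContinuousOn r (Set.Icc c u) := fun v hv =>
      ((hD v hv.1).continuousAt).continuousWithinAt
    obtain ⟨ξ, hξ, hslope⟩ := exists_hasDerivAt_eq_slope r
      (fun v => ((1 + ρ) * v ^ ρ - (1 + ρ) * (v - c) ^ ρ) / (c * (1 + ρ)) -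
        ρ * (v - c) ^ (ρ - 1)) hlt hcont (fun v hv => hD v hv.1.le)
    have h0 := hDnn ξ hξ.1.le
    rw [hslope, hrc, sub_zero] at h0
    have := mul_nonneg h0 (by linarith : (0:ℝ) ≤ u - c)
    rwa [div_mul_cancel₀ _ (by linarith : u - c ≠ 0)] at this
end

section
/- Let c ≥ 1 be real and ρ ∈ (0,1). Define r(u) = (u^{1+ρ} − (u−c)^{1+ρ} + ρ c^{1+ρ})/(c(1+ρ)) − u^ρ for u ≥ c. Then r(u) ≥ 0 for all u ≥ c. -/
open Real Set

/-- Nonnegativity of the parametric function r(u) for ρ ∈ (0,1) (Appendix E). -/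
theorem parametric_nonneg_rho_lt_one (c ρ : ℝ) (hc : 1 ≤ c)
    (hρ0 : 0 < ρ) (hρ1 : ρ < 1) :
    ∀ u : ℝ, c ≤ u →
      0 ≤ (u ^ (1 + ρ) - (u - c) ^ (1 + ρ) + ρ * c ^ (1 + ρ)) / (c * (1 + ρ)) -
          u ^ ρ := by
  have hc0 : (0:ℝ) < c := lt_of_lt_of_le one_pos hc
  have h1ρ : (0:ℝ) < 1 + ρ := by linarith
  set f : ℝ → ℝ := fun u =>
    (u ^ (1 + ρ) - (u - c) ^ (1 + ρ) + ρ * c ^ (1 + ρ)) / (c * (1 + ρ)) - u ^ ρ with hf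
  -- derivative of f at any u ≥ c
  have hderiv : ∀ u : ℝ, c ≤ u →
      HasDerivAt f (((1+ρ) * u ^ ρ - (1+ρ) * (u - c) ^ ρ) / (c * (1+ρ)) - ρ * u ^ (ρ-1)) u := by
    intro u hu
    have hu0 : (0:ℝ) < u := lt_of_lt_of_le hc0 hu
    have h1 : HasDerivAt (fun x : ℝ => x ^ (1+ρ)) ((1+ρ) * u ^ ρ) u := by
      have := Real.hasDerivAt_rpow_const (x := u) (p := 1+ρ) (Or.inl hu0.ne')
      simpa using this
    have h2 : HasDerivAt (fun x : ℝ => (x - c) ^ (1+ρ)) ((1+ρ) * (u - c) ^ ρ) u := by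
      have hbase : HasDerivAt (fun x : ℝ => x - c) 1 u := (hasDerivAt_id u).sub_const c
      have := (Real.hasDerivAt_rpow_const (x := u - c) (p := 1+ρ)
        (Or.inr (by linarith))).comp u hbase
      simpa [Function.comp_def] using this
    have h3 : HasDerivAt (fun x : ℝ => x ^ ρ) (ρ * u ^ (ρ-1)) u := by
      have := Real.hasDerivAt_rpow_const (x := u) (p := ρ) (Or.inl hu0.ne')
      simpa using this
    exact (((h1.sub h2).add_const (ρ * c ^ (1+ρ))).div_const (c * (1+ρ))).sub h3
  -- derivative nonneg on interior
  have hmono : MonotoneOn f (Ici c) := by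
    apply monotoneOn_of_deriv_nonneg (convex_Ici c)
    · exact fun u hu => ((hderiv u hu).differentiableAt.continuousAt).continuousWithinAt
    · intro u hu
      rw [interior_Ici] at hu
      exact ((hderiv u (le_of_lt hu)).differentiableAt).differentiableWithinAt
    · intro u hu
      rw [interior_Ici] at hu
      have huc : c < u := hu
      have hu0 : (0:ℝ) < u := lt_of_lt_of_le hc0 huc.le
      rw [(hderiv u huc.le).deriv]
      -- key: (u-c)^ρ ≤ u^ρ - ρ*c*u^(ρ-1), via Bernoulli
      have hber : (1 + (-(c/u))) ^ ρ ≤ 1 + ρ * (-(c/u)) :=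
        rpow_one_add_le_one_add_mul_self
          (by rw [neg_le, neg_neg]; exact (div_le_one hu0).2 huc.le) hρ0.le hρ1.le
      have huρ : (0:ℝ) < u ^ ρ := Real.rpow_pos_of_pos hu0 ρ
      have hkey : (u - c) ^ ρ ≤ u ^ ρ - ρ * c * u ^ (ρ - 1) := by
        have h1 : (1 + (-(c/u))) = (u - c) / u := by field_simp; ring
        have h2 : ((u - c) / u) ^ ρ * u ^ ρ = (u - c) ^ ρ := by
          rw [← Real.mul_rpow (div_nonneg (by linarith) hu0.le) hu0.le]
          rw [div_mul_cancel₀ _ hu0.ne']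
        have h3 : u ^ (ρ - 1) = u ^ ρ / u := by
          rw [Real.rpow_sub hu0, Real.rpow_one]
        have := mul_le_mul_of_nonneg_right hber huρ.le
        rw [h1, h2] at this
        calc (u - c) ^ ρ ≤ (1 + ρ * (-(c/u))) * u ^ ρ := this
          _ = u ^ ρ - ρ * c * u ^ (ρ - 1) := by rw [h3]; field_simp; ring
      have hne : c * (1 + ρ) ≠ 0 := by positivity
      rw [sub_nonneg, le_div_iff₀ (by positivity)]
      nlinarith [Real.rpow_pos_of_pos hu0 (ρ-1)]
  have hfc : f c = 0 := by
    have : c - c = 0 := sub_self c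
    simp only [hf, this]
    rw [Real.zero_rpow (by positivity : (1+ρ) ≠ 0)]
    rw [Real.rpow_add hc0 1, Real.rpow_one]
    field_simp
    ring
  intro u hu
  have := hmono (self_mem_Ici) hu hu
  rw [hfc] at this
  exact this
end

section
/- Let ρ ∈ [1,2] and c ≥ 1 be real. Then for all u ≥ c, u^ρ ≤ (u^{1+ρ} − (u−c)^{1+ρ})/(1+ρ) + (u^ρ − (u−c)^ρ)/ρ + c^ρ(ρ^2 − cρ − 1)/(ρ(1+ρ)). -/
open Real Set

/-- Pointwise inequality for the improved upper bound when ρ ∈ [1,2]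
(Lemma in Appendix F). -/
theorem pointwise_bound_rho_one_two (ρ c : ℝ) (hρ1 : 1 ≤ ρ) (hρ2 : ρ ≤ 2)
    (hc : 1 ≤ c) :
    ∀ u : ℝ, c ≤ u →
      u ^ ρ ≤ (u ^ (1 + ρ) - (u - c) ^ (1 + ρ)) / (1 + ρ) +
          (u ^ ρ - (u - c) ^ ρ) / ρ +
          c ^ ρ * (ρ ^ 2 - c * ρ - 1) / (ρ * (1 + ρ)) := by
  have hρ0 : (0:ℝ) < ρ := by linarith
  have h1ρ : (0:ℝ) < 1 + ρ := by linarith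
  have hc0 : (0:ℝ) < c := by linarith
  set K : ℝ := c ^ ρ * (ρ ^ 2 - c * ρ - 1) / (ρ * (1 + ρ)) with hK
  set f : ℝ → ℝ := fun u => (u ^ (1 + ρ) - (u - c) ^ (1 + ρ)) / (1 + ρ) +
      (u ^ ρ - (u - c) ^ ρ) / ρ + K - u ^ ρ with hf
  -- derivative of f on the interior
  have hderiv : ∀ u ∈ interior (Ici c), HasDerivAt f
      (u ^ ρ - (u - c) ^ ρ + (u ^ (ρ - 1) - (u - c) ^ (ρ - 1)) - ρ * u ^ (ρ - 1)) u := by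
    intro u hu
    rw [interior_Ici] at hu
    have hcu : c < u := hu
    have hu0 : (0:ℝ) < u := by linarith
    have hv0 : (0:ℝ) < u - c := by linarith
    have h1 : HasDerivAt (fun x : ℝ => x ^ (1 + ρ)) ((1 + ρ) * u ^ (1 + ρ - 1)) u :=
      Real.hasDerivAt_rpow_const (Or.inl hu0.ne')
    have hsub : HasDerivAt (fun x : ℝ => x - c) 1 u := by
      simpa using (hasDerivAt_id u).sub_const c
    have h2 : HasDerivAt (fun x : ℝ => (x - c) ^ (1 + ρ))
        ((1 + ρ) * (u - c) ^ (1 + ρ - 1) * 1) u :=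
      by have := (Real.hasDerivAt_rpow_const (p := 1 + ρ) (Or.inl hv0.ne')).comp u hsub; exact this
    have h3 : HasDerivAt (fun x : ℝ => x ^ ρ) (ρ * u ^ (ρ - 1)) u :=
      Real.hasDerivAt_rpow_const (Or.inl hu0.ne')
    have h4 : HasDerivAt (fun x : ℝ => (x - c) ^ ρ) (ρ * (u - c) ^ (ρ - 1) * 1) u :=
      by have := (Real.hasDerivAt_rpow_const (p := ρ) (Or.inl hv0.ne')).comp u hsub; exact this
    have := ((((h1.sub h2).div_const (1 + ρ)).add ((h3.sub h4).div_const ρ)).add_const K).sub h3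
    refine this.congr_deriv ?_
    have e : 1 + ρ - 1 = ρ := by ring
    rw [e]
    field_simp
  -- the derivative is nonnegative on the interior
  have hderiv_nonneg : ∀ u ∈ interior (Ici c),
      0 ≤ u ^ ρ - (u - c) ^ ρ + (u ^ (ρ - 1) - (u - c) ^ (ρ - 1)) - ρ * u ^ (ρ - 1) := by
    intro u hu
    rw [interior_Ici] at hu
    have hcu : c < u := hu
    have hu0 : (0:ℝ) < u := by linarith
    set v : ℝ := u - c with hvdef
    have hv0 : (0:ℝ) < v := by simp [hvdef]; linarith
    -- weighted AM-GM : v^(ρ-1) * u^(2-ρ) ≤ (ρ-1) v + (2-ρ) u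
    have amgm : v ^ (ρ - 1) * u ^ (2 - ρ) ≤ (ρ - 1) * v + (2 - ρ) * u :=
      Real.geom_mean_le_arith_mean2_weighted (by linarith) (by linarith) hv0.le hu0.le
        (by ring)
    have hv1 : (0:ℝ) < v + 1 := by linarith
    have hstep1 : (v + 1) * (v ^ (ρ - 1) * u ^ (2 - ρ)) ≤ (v + 1) * ((ρ - 1) * v + (2 - ρ) * u) :=
      mul_le_mul_of_nonneg_left amgm hv1.le
    have hstep2 : (v + 1) * ((ρ - 1) * v + (2 - ρ) * u) ≤ (u + 1 - ρ) * u := by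
      have hid : (u + 1 - ρ) * u - (v + 1) * ((ρ - 1) * v + (2 - ρ) * u)
          = ρ * (c - 1) * v + c * (c - 1) := by
        rw [hvdef]; ring
      have h1 : 0 ≤ ρ * (c - 1) * v :=
        mul_nonneg (mul_nonneg hρ0.le (by linarith)) hv0.le
      have h2 : 0 ≤ c * (c - 1) := mul_nonneg hc0.le (by linarith)
      linarith
    have huu : u ^ (ρ - 1) * u ^ (2 - ρ) = u := by
      rw [← Real.rpow_add hu0]
      norm_num
    have hkey : (v + 1) * v ^ (ρ - 1) ≤ (u + 1 - ρ) * u ^ (ρ - 1) := by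
      have hupos : (0:ℝ) < u ^ (2 - ρ) := Real.rpow_pos_of_pos hu0 _
      rw [← mul_le_mul_iff_of_pos_right hupos]
      calc (v + 1) * v ^ (ρ - 1) * u ^ (2 - ρ)
          = (v + 1) * (v ^ (ρ - 1) * u ^ (2 - ρ)) := by ring
        _ ≤ (v + 1) * ((ρ - 1) * v + (2 - ρ) * u) := hstep1
        _ ≤ (u + 1 - ρ) * u := hstep2
        _ = (u + 1 - ρ) * u ^ (ρ - 1) * u ^ (2 - ρ) := by rw [mul_assoc, huu]
    have hury : u ^ ρ = u * u ^ (ρ - 1) := by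
      have := Real.rpow_add hu0 1 (ρ - 1)
      rw [show (1:ℝ) + (ρ - 1) = ρ by ring, Real.rpow_one] at this
      exact this
    have hvry : v ^ ρ = v * v ^ (ρ - 1) := by
      have := Real.rpow_add hv0 1 (ρ - 1)
      rw [show (1:ℝ) + (ρ - 1) = ρ by ring, Real.rpow_one] at this
      exact this
    rw [hury, hvry]
    nlinarith [hkey]
  -- monotonicity of f on Ici c
  have hcont : ContinuousOn f (Ici c) := by
    have h1 : ContinuousOn (fun x : ℝ => x ^ (1 + ρ)) (Ici c) :=
      continuousOn_id.rpow_const (fun x _ => Or.inr (by linarith))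
    have h2 : ContinuousOn (fun x : ℝ => (x - c) ^ (1 + ρ)) (Ici c) :=
      (continuousOn_id.sub continuousOn_const).rpow_const (fun x _ => Or.inr (by linarith))
    have h3 : ContinuousOn (fun x : ℝ => x ^ ρ) (Ici c) :=
      continuousOn_id.rpow_const (fun x _ => Or.inr (by linarith))
    have h4 : ContinuousOn (fun x : ℝ => (x - c) ^ ρ) (Ici c) :=
      (continuousOn_id.sub continuousOn_const).rpow_const (fun x _ => Or.inr (by linarith))
    exact ((((h1.sub h2).div_const _).add ((h3.sub h4).div_const _)).add continuousOn_const).sub h3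
  have hmono : MonotoneOn f (Ici c) := by
    apply monotoneOn_of_deriv_nonneg (convex_Ici c) hcont
    · intro x hx
      exact (hderiv x hx).differentiableAt.differentiableWithinAt
    · intro x hx
      rw [(hderiv x hx).deriv]
      exact hderiv_nonneg x hx
  -- value at c
  have hfc : f c = 0 := by
    have hcc : c - c = 0 := by ring
    have hcry : c ^ (1 + ρ) = c * c ^ ρ := by
      rw [Real.rpow_add hc0, Real.rpow_one]
    simp only [hf, hK, hcc, Real.zero_rpow h1ρ.ne', Real.zero_rpow hρ0.ne', hcry]
    field_simp
    ring
  intro u hu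
  have := hmono (self_mem_Ici) (hu) hu
  rw [hfc] at this
  simp only [hf] at this
  linarith
end

section
/- Let ρ ≥ 2 and c > 1 be real. Define r(u) = (u^{1+ρ} − (u−c)^{1+ρ})/(c(1+ρ)) − u^ρ + (ρ c u^{ρ−1})/2 − ρ(ρ−1)/(2(1+ρ)) for u ≥ c. Then r(u) ≥ 0 for all u ≥ c. -/
open Real

/-- Normalized second-order Bernoulli-type inequality. -/
lemma parametric_normN {ρ : ℝ} (hρ : 2 ≤ ρ) :
    ∀ t : ℝ, 0 ≤ t → t ≤ 1 →
      (1 - t) ^ ρ ≤ 1 - ρ * t + ρ * (ρ - 1) / 2 * t ^ 2 := by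
  intro t ht0 ht1
  set f : ℝ → ℝ := fun t => 1 - ρ * t + ρ * (ρ - 1) / 2 * t ^ 2 - (1 - t) ^ ρ with hf
  have hcont : ContinuousOn f (Set.Icc 0 1) := by
    apply ContinuousOn.sub
    · fun_prop
    · exact ((Real.continuous_rpow_const (by linarith)).comp
        (continuous_const.sub continuous_id)).continuousOn
  have hderiv : ∀ x ∈ Set.Ioo (0:ℝ) 1, HasDerivAt f
      (-ρ + ρ * (ρ - 1) / 2 * (2 * x) - ρ * (1 - x) ^ (ρ - 1) * (-1)) x := by
    intro x hx
    have h1x : (0:ℝ) < 1 - x := by linarith [hx.2]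
    have hpow : HasDerivAt (fun t : ℝ => (1 - t) ^ ρ) (ρ * (1 - x) ^ (ρ - 1) * (-1)) x := by
      have := (Real.hasDerivAt_rpow_const (x := 1 - x) (p := ρ) (Or.inl h1x.ne')).comp x
        (((hasDerivAt_id x).const_sub 1))
      exact this
    have h2 : HasDerivAt (fun t : ℝ => 1 - ρ * t + ρ * (ρ - 1) / 2 * t ^ 2)
        (-ρ + ρ * (ρ - 1) / 2 * (2 * x)) x := by
      have ha : HasDerivAt (fun t : ℝ => 1 - ρ * t) (-ρ) x := by
        simpa using ((hasDerivAt_id x).const_mul ρ).const_sub 1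
      have hb : HasDerivAt (fun t : ℝ => ρ * (ρ - 1) / 2 * t ^ 2)
          (ρ * (ρ - 1) / 2 * (2 * x)) x := by
        have := (hasDerivAt_pow 2 x).const_mul (ρ * (ρ - 1) / 2)
        simpa [mul_comm, mul_assoc] using this
      exact ha.add hb
    exact h2.sub hpow
  have hmono : MonotoneOn f (Set.Icc 0 1) := by
    apply monotoneOn_of_deriv_nonneg (convex_Icc 0 1) hcont
    · rw [interior_Icc]
      exact fun x hx => ((hderiv x hx).differentiableAt).differentiableWithinAt
    · rw [interior_Icc]
      intro x hx
      rw [(hderiv x hx).deriv]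
      -- Bernoulli : 1 + (ρ-1)*(-x) ≤ (1 + (-x))^(ρ-1)
      have hb := one_add_mul_self_le_rpow_one_add (s := -x) (p := ρ - 1)
        (by linarith [hx.2]) (by linarith)
      have : (1:ℝ) - (ρ - 1) * x ≤ (1 - x) ^ (ρ - 1) := by
        have h' : (1:ℝ) + (-x) = 1 - x := by ring
        rw [h'] at hb; linarith [hb]
      nlinarith [this, hx.1]
  have h0 : f 0 = 0 := by simp [hf, Real.one_rpow]
  have := hmono (Set.mem_Icc.2 ⟨le_refl 0, by norm_num⟩) (Set.mem_Icc.2 ⟨ht0, ht1⟩) ht0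
  rw [h0] at this
  simp only [hf] at this
  linarith

/-- Scaled version: second-order Taylor upper bound for `(u-c)^ρ`. -/
lemma parametric_lemA {ρ c u : ℝ} (hρ : 2 ≤ ρ) (hc : 0 < c) (hcu : c ≤ u) :
    (u - c) ^ ρ ≤ u ^ ρ - ρ * c * u ^ (ρ - 1) + ρ * (ρ - 1) / 2 * c ^ 2 * u ^ (ρ - 2) := by
  have hu : (0:ℝ) < u := lt_of_lt_of_le hc hcu
  have ht0 : (0:ℝ) ≤ c / u := by positivity
  have ht1 : c / u ≤ 1 := (div_le_one hu).2 hcu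
  have hN := parametric_normN hρ (c / u) ht0 ht1
  have hupos : (0:ℝ) ≤ u ^ ρ := (Real.rpow_nonneg hu.le ρ)
  have key := mul_le_mul_of_nonneg_left hN hupos
  have h1 : u ^ ρ * (1 - c / u) ^ ρ = (u - c) ^ ρ := by
    rw [← Real.mul_rpow hu.le (by
      have := sub_nonneg.2 ht1; linarith)]
    congr 1
    field_simp
  have h2 : u ^ ρ / u = u ^ (ρ - 1) := by
    rw [Real.rpow_sub hu, Real.rpow_one]
  have h3 : u ^ ρ / u ^ 2 = u ^ (ρ - 2) := by
    rw [Real.rpow_sub hu, show (2:ℝ) = ((2:ℕ):ℝ) by norm_num, Real.rpow_natCast]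
  have hu' : u ≠ 0 := hu.ne'
  have hexp : u ^ ρ * (1 - ρ * (c / u) + ρ * (ρ - 1) / 2 * (c / u) ^ 2)
      = u ^ ρ - ρ * c * (u ^ ρ / u) + ρ * (ρ - 1) / 2 * c ^ 2 * (u ^ ρ / u ^ 2) := by
    ring
  rw [h1, hexp, h2, h3] at key
  exact key

/-- Nonnegativity of the parametric function for ρ ≥ 2 (Appendix G). -/
theorem parametric_nonneg_rho_ge_two (ρ c : ℝ) (hρ : 2 ≤ ρ) (hc : 1 < c) :
    ∀ u : ℝ, c ≤ u →
      0 ≤ (u ^ (1 + ρ) - (u - c) ^ (1 + ρ)) / (c * (1 + ρ)) - u ^ ρ +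
          ρ * c * u ^ (ρ - 1) / 2 - ρ * (ρ - 1) / (2 * (1 + ρ)) := by
  have hc0 : (0:ℝ) < c := by linarith
  have h1ρ : (0:ℝ) < 1 + ρ := by linarith
  set r : ℝ → ℝ := fun u =>
    (u ^ (1 + ρ) - (u - c) ^ (1 + ρ)) / (c * (1 + ρ)) - u ^ ρ +
      ρ * c * u ^ (ρ - 1) / 2 - ρ * (ρ - 1) / (2 * (1 + ρ)) with hr
  -- continuity on [c, ∞)
  have hcont : ContinuousOn r (Set.Ici c) := by
    apply ContinuousOn.sub
    apply ContinuousOn.add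
    apply ContinuousOn.sub
    · exact (((Real.continuous_rpow_const (by linarith)).sub
        ((Real.continuous_rpow_const (q := 1 + ρ) (by linarith)).comp
          (continuous_id.sub continuous_const))).div_const _).continuousOn
    · exact (Real.continuous_rpow_const (by linarith)).continuousOn
    · exact ((continuous_const.mul
        (Real.continuous_rpow_const (q := ρ - 1) (by linarith))).div_const 2).continuousOn
    · exact continuousOn_const
  -- derivative on (c, ∞)
  have hderiv : ∀ x ∈ Set.Ioi c, HasDerivAt r
      (((1 + ρ) * x ^ ρ - (1 + ρ) * (x - c) ^ ρ * 1) / (c * (1 + ρ))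
        - ρ * x ^ (ρ - 1) + ρ * c * ((ρ - 1) * x ^ (ρ - 1 - 1)) / 2) x := by
    intro x hx
    have hxc : c < x := hx
    have hx0 : (0:ℝ) < x := lt_trans hc0 hxc
    have hxc0 : (0:ℝ) < x - c := by linarith
    have ha : HasDerivAt (fun u : ℝ => u ^ (1 + ρ)) ((1 + ρ) * x ^ ρ) x := by
      have := Real.hasDerivAt_rpow_const (x := x) (p := 1 + ρ) (Or.inl hx0.ne')
      simpa [add_sub_cancel_left] using this
    have hb : HasDerivAt (fun u : ℝ => (u - c) ^ (1 + ρ)) ((1 + ρ) * (x - c) ^ ρ * 1) x := by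
      have hin : HasDerivAt (fun u : ℝ => u - c) 1 x := (hasDerivAt_id x).sub_const c
      have := (Real.hasDerivAt_rpow_const (x := x - c) (p := 1 + ρ) (Or.inl hxc0.ne')).comp x hin
      simpa [Function.comp_def, add_sub_cancel_left] using this
    have hd : HasDerivAt (fun u : ℝ => u ^ ρ) (ρ * x ^ (ρ - 1)) x :=
      Real.hasDerivAt_rpow_const (Or.inl hx0.ne')
    have he : HasDerivAt (fun u : ℝ => ρ * c * u ^ (ρ - 1) / 2)
        (ρ * c * ((ρ - 1) * x ^ (ρ - 1 - 1)) / 2) x := by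
      exact ((Real.hasDerivAt_rpow_const (x := x) (p := ρ - 1)
        (Or.inl hx0.ne')).const_mul (ρ * c)).div_const 2
    exact ((((ha.sub hb).div_const (c * (1 + ρ))).sub hd).add he).sub_const (ρ * (ρ - 1) / (2 * (1 + ρ)))
  have hmono : MonotoneOn r (Set.Ici c) := by
    apply monotoneOn_of_deriv_nonneg (convex_Ici c) hcont
    · rw [interior_Ici]
      exact fun x hx => ((hderiv x hx).differentiableAt).differentiableWithinAt
    · rw [interior_Ici]
      intro x hx
      rw [(hderiv x hx).deriv]
      have hxc : c < x := hx
      have hx0 : (0:ℝ) < x := lt_trans hc0 hxc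
      have hA := parametric_lemA (u := x) hρ hc0 hxc.le
      -- rewrite x ^ (ρ - 1 - 1) as x ^ (ρ - 2)
      have hee : ρ - 1 - 1 = ρ - 2 := by ring
      rw [hee]
      have hkey : ((1 + ρ) * x ^ ρ - (1 + ρ) * (x - c) ^ ρ * 1) / (c * (1 + ρ))
          = (x ^ ρ - (x - c) ^ ρ) / c := by
        field_simp
      rw [hkey]
      have h2 : ρ * c * x ^ (ρ - 1) - ρ * (ρ - 1) / 2 * c ^ 2 * x ^ (ρ - 2)
          ≤ x ^ ρ - (x - c) ^ ρ := by linarith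
      have h3 : (ρ * c * x ^ (ρ - 1) - ρ * (ρ - 1) / 2 * c ^ 2 * x ^ (ρ - 2)) / c
          ≤ (x ^ ρ - (x - c) ^ ρ) / c := by gcongr
      have h4 : (ρ * c * x ^ (ρ - 1) - ρ * (ρ - 1) / 2 * c ^ 2 * x ^ (ρ - 2)) / c
          = ρ * x ^ (ρ - 1) - ρ * (ρ - 1) / 2 * c * x ^ (ρ - 2) := by
        field_simp
      rw [h4] at h3
      linarith
  -- value at c
  have hrc : 0 ≤ r c := by
    have h0 : (c - c) ^ (1 + ρ) = 0 := by
      rw [sub_self, Real.zero_rpow (by positivity)]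
    have h1 : c ^ (1 + ρ) = c * c ^ ρ := by
      rw [Real.rpow_add hc0, Real.rpow_one]
    have h2 : c ^ (ρ - 1) = c ^ ρ / c := by
      rw [Real.rpow_sub hc0, Real.rpow_one]
    have hcρ : 1 ≤ c ^ ρ := Real.one_le_rpow hc.le (by linarith)
    have hid : r c = ρ * (ρ - 1) * (c ^ ρ - 1) / (2 * (1 + ρ)) := by
      rw [hr]
      simp only [h0, h1, h2]
      field_simp
      ring
    rw [hid]
    apply div_nonneg
    · have h5 : (0:ℝ) ≤ ρ * (ρ - 1) := by nlinarith
      have h6 : (0:ℝ) ≤ c ^ ρ - 1 := by linarith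
      nlinarith [mul_nonneg h5 h6]
    · linarith
  intro u hu
  have := hmono (Set.mem_Ici.2 (le_refl c)) (Set.mem_Ici.2 hu) hu
  exact le_trans hrc this
end
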